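/- Let k be an algebraically closed field, A a finite-dimensional k-algebra, and t a Calabi–Yau family of traces on the finitely generated projective right A-modules. Fix a finitely generated projective right A-module R and y ∈ End_A(R). Then there exists a unique natural endomorphism η of the identity functor on the category of right A-modules such that for every finitely generated projective right A-module P and every choice of dual bases (g_i) of Hom_A(P,R) and (g^i) of Hom_A(R,P) with respect to t, one has η_P = Σ_i g^i ∘ y ∘ g_i; in particular the sum Σ_i g^i ∘ y ∘ g_i is independent of the choice of dual bases. -/

import Mathlib

universe u

/-- A bundled finitely generated projective right `A`-module (with compatible `k`-action). -/
structure FGProj (k A : Type u) [Field k] [Ring A] [Algebra k A] : Type (u + 1) where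
  carrier : Type u
  [isAddCommGroup : AddCommGroup carrier]
  [isModuleK : Module k carrier]
  [isModuleA : Module Aᵐᵒᵖ carrier]
  [isTower : IsScalarTower k Aᵐᵒᵖ carrier]
  [isFinite : Module.Finite Aᵐᵒᵖ carrier]
  [isProjective : Module.Projective Aᵐᵒᵖ carrier]

attribute [instance] FGProj.isAddCommGroup FGProj.isModuleK FGProj.isModuleA
  FGProj.isTower FGProj.isFinite FGProj.isProjective

instance (k A : Type u) [Field k] [Ring A] [Algebra k A] : CoeSort (FGProj k A) (Type u) :=
  ⟨FGProj.carrier⟩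

/-- A Calabi–Yau family of traces on the finitely generated projective right `A`-modules. -/
structure CYTraces (k A : Type u) [Field k] [Ring A] [Algebra k A] : Type (u + 1) where
  t : ∀ P : FGProj k A, ((P : Type u) →ₗ[Aᵐᵒᵖ] P) →ₗ[k] k
  cyclic : ∀ (P Q : FGProj k A) (f : (P : Type u) →ₗ[Aᵐᵒᵖ] Q) (g : (Q : Type u) →ₗ[Aᵐᵒᵖ] P),
    t P (g ∘ₗ f) = t Q (f ∘ₗ g)
  nondeg_left : ∀ (P Q : FGProj k A) (f : (P : Type u) →ₗ[Aᵐᵒᵖ] Q), f ≠ 0 →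
    ∃ g : (Q : Type u) →ₗ[Aᵐᵒᵖ] P, t Q (f ∘ₗ g) ≠ 0
  nondeg_right : ∀ (P Q : FGProj k A) (g : (Q : Type u) →ₗ[Aᵐᵒᵖ] P), g ≠ 0 →
    ∃ f : (P : Type u) →ₗ[Aᵐᵒᵖ] Q, t Q (f ∘ₗ g) ≠ 0

/-- A natural endomorphism of the identity functor on the category of right `A`-modules
(formalised as left `Aᵐᵒᵖ`-modules). -/
structure NatEndo (A : Type u) [Ring A] : Type (u + 1) where
  app : ∀ (M : Type u) [AddCommGroup M] [Module Aᵐᵒᵖ M], M →ₗ[Aᵐᵒᵖ] M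
  naturality : ∀ (M N : Type u) [AddCommGroup M] [Module Aᵐᵒᵖ M]
      [AddCommGroup N] [Module Aᵐᵒᵖ N] (h : M →ₗ[Aᵐᵒᵖ] N),
      h ∘ₗ app M = app N ∘ₗ h

open scoped Classical

section Helpers

variable {k A : Type u} [Field k] [Ring A] [Algebra k A]

set_option linter.unusedSectionVars false

namespace CYHelp

variable (k) in
/-- sum-comp -/
theorem sum_comp' {P Q S : Type u} [AddCommGroup P] [Module Aᵐᵒᵖ P]
    [AddCommGroup Q] [Module Aᵐᵒᵖ Q] [AddCommGroup S] [Module Aᵐᵒᵖ S]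
    {ι : Type u} (s : Finset ι) (f : ι → (Q →ₗ[Aᵐᵒᵖ] S)) (g : P →ₗ[Aᵐᵒᵖ] Q) :
    (∑ i ∈ s, f i) ∘ₗ g = ∑ i ∈ s, f i ∘ₗ g := by
  ext x; simp [LinearMap.sum_apply]

theorem comp_sum' {P Q S : Type u} [AddCommGroup P] [Module Aᵐᵒᵖ P]
    [AddCommGroup Q] [Module Aᵐᵒᵖ Q] [AddCommGroup S] [Module Aᵐᵒᵖ S]
    {ι : Type u} (s : Finset ι) (g : Q →ₗ[Aᵐᵒᵖ] S) (f : ι → (P →ₗ[Aᵐᵒᵖ] Q)) :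
    g ∘ₗ (∑ i ∈ s, f i) = ∑ i ∈ s, g ∘ₗ f i := by
  ext x; simp [LinearMap.sum_apply]

variable [FiniteDimensional k A]

theorem finiteDimensional_hom (P Q : FGProj k A) :
    FiniteDimensional k ((P : Type u) →ₗ[Aᵐᵒᵖ] (Q : Type u)) := by
  haveI : Module.Finite k (P : Type u) := Module.Finite.trans Aᵐᵒᵖ _
  haveI : Module.Finite k (Q : Type u) := Module.Finite.trans Aᵐᵒᵖ _
  refine FiniteDimensional.of_injective
    ({ toFun := fun f => f.restrictScalars k, map_add' := fun _ _ => rfl,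
       map_smul' := fun _ _ => rfl } :
      ((P : Type u) →ₗ[Aᵐᵒᵖ] Q) →ₗ[k] ((P : Type u) →ₗ[k] Q)) ?_
  intro f g hfg
  ext x
  exact congrFun (congrArg DFunLike.coe hfg) x

variable (t : CYTraces k A) (R : FGProj k A)

/-- The `k`-bilinear pairing `Hom(R,P) × Hom(P,R) → k`, `(v,u) ↦ t_R (u ∘ v)`. -/
noncomputable def pairB (P : FGProj k A) :
    ((R : Type u) →ₗ[Aᵐᵒᵖ] P) →ₗ[k] (((P : Type u) →ₗ[Aᵐᵒᵖ] R) →ₗ[k] k) where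
  toFun v :=
    { toFun := fun u => t.t R (u ∘ₗ v)
      map_add' := fun u₁ u₂ => by simp only [LinearMap.add_comp, map_add]
      map_smul' := fun c u => by simp only [LinearMap.smul_comp, map_smul, RingHom.id_apply] }
  map_add' v₁ v₂ := by ext u; simp [LinearMap.comp_add]
  map_smul' c v := by ext u; simp [LinearMap.comp_smul]

theorem pairB_apply (P : FGProj k A) (v : (R : Type u) →ₗ[Aᵐᵒᵖ] P)
    (u : (P : Type u) →ₗ[Aᵐᵒᵖ] R) : pairB t R P v u = t.t R (u ∘ₗ v) := rfl

/-- Existence of dual bases for any f.g. projective. -/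
theorem exists_dual (P : FGProj k A) :
    ∃ (ι : Type u) (_ : Fintype ι) (g : Module.Basis ι k ((P : Type u) →ₗ[Aᵐᵒᵖ] R))
      (g' : Module.Basis ι k ((R : Type u) →ₗ[Aᵐᵒᵖ] P)),
      ∀ i j, t.t R (g j ∘ₗ g' i) = if i = j then 1 else 0 := by
  haveI hW : FiniteDimensional k ((P : Type u) →ₗ[Aᵐᵒᵖ] R) := finiteDimensional_hom P R
  haveI hV : FiniteDimensional k ((R : Type u) →ₗ[Aᵐᵒᵖ] P) := finiteDimensional_hom R P
  set V := ((R : Type u) →ₗ[Aᵐᵒᵖ] P)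
  set W := ((P : Type u) →ₗ[Aᵐᵒᵖ] R)
  have hφinj : Function.Injective (pairB t R P) := by
    rw [injective_iff_map_eq_zero]
    intro v hv
    by_contra hne
    obtain ⟨f, hf⟩ := t.nondeg_right P R v hne
    exact hf (by simpa [pairB_apply] using congrArg (fun φ => φ f) hv)
  have hψinj : Function.Injective (pairB t R P).flip := by
    rw [injective_iff_map_eq_zero]
    intro u hu
    by_contra hne
    obtain ⟨g, hg⟩ := t.nondeg_left P R u hne
    exact hg (by simpa [pairB_apply] using congrArg (fun φ => φ g) hu)
  have h1 : Module.finrank k V ≤ Module.finrank k W := by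
    calc Module.finrank k V ≤ Module.finrank k (Module.Dual k W) :=
          LinearMap.finrank_le_finrank_of_injective hφinj
      _ = Module.finrank k W := Subspace.dual_finrank_eq
  have h2 : Module.finrank k W ≤ Module.finrank k V := by
    calc Module.finrank k W ≤ Module.finrank k (Module.Dual k V) :=
          LinearMap.finrank_le_finrank_of_injective hψinj
      _ = Module.finrank k V := Subspace.dual_finrank_eq
  have heq : Module.finrank k V = Module.finrank k (Module.Dual k W) := by
    rw [Subspace.dual_finrank_eq]; exact le_antisymm h1 h2
  let e : V ≃ₗ[k] Module.Dual k W := LinearEquiv.ofBijective (pairB t R P)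
    ⟨hφinj, (LinearMap.injective_iff_surjective_of_finrank_eq_finrank heq).mp hφinj⟩
  let w : Module.Basis (Module.Basis.ofVectorSpaceIndex k W) k W := Module.Basis.ofVectorSpace k W
  haveI : Fintype (Module.Basis.ofVectorSpaceIndex k W) := FiniteDimensional.fintypeBasisIndex w
  refine ⟨Module.Basis.ofVectorSpaceIndex k W, inferInstance, w, w.dualBasis.map e.symm, fun i j => ?_⟩
  have : pairB t R P ((w.dualBasis.map e.symm) i) (w j) = if j = i then 1 else 0 := by
    simp only [Module.Basis.map_apply]
    have : pairB t R P (e.symm (w.dualBasis i)) = w.dualBasis i := e.apply_symm_apply _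
    rw [this, Module.Basis.dualBasis_apply_self]
  rw [← pairB_apply]
  rw [this]
  simp [eq_comm]


set_option linter.unusedSectionVars false

theorem expand_v (P : FGProj k A) {ι : Type u} [Fintype ι]
    (g : Module.Basis ι k ((P : Type u) →ₗ[Aᵐᵒᵖ] R)) (g' : Module.Basis ι k ((R : Type u) →ₗ[Aᵐᵒᵖ] P))
    (hd : ∀ i j, t.t R (g j ∘ₗ g' i) = if i = j then 1 else 0)
    (v : (R : Type u) →ₗ[Aᵐᵒᵖ] P) :
    v = ∑ i, t.t R (g i ∘ₗ v) • g' i := by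
  have hc : ∀ j, t.t R (g j ∘ₗ v) = g'.repr v j := by
    intro j
    calc t.t R (g j ∘ₗ v) = (pairB t R P).flip (g j) v := rfl
      _ = (pairB t R P).flip (g j) (∑ i, g'.repr v i • g' i) := by rw [g'.sum_repr v]
      _ = ∑ i, g'.repr v i • ((pairB t R P).flip (g j) (g' i)) := by
          rw [map_sum]; simp only [map_smul]
      _ = ∑ i, g'.repr v i * (if i = j then 1 else 0) := by
          refine Finset.sum_congr rfl fun i _ => ?_
          rw [smul_eq_mul]
          congr 1
          exact hd i j
      _ = g'.repr v j := by simp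
  conv_lhs => rw [← g'.sum_repr v]
  exact Finset.sum_congr rfl fun i _ => by rw [hc i]

theorem expand_u (P : FGProj k A) {ι : Type u} [Fintype ι]
    (g : Module.Basis ι k ((P : Type u) →ₗ[Aᵐᵒᵖ] R)) (g' : Module.Basis ι k ((R : Type u) →ₗ[Aᵐᵒᵖ] P))
    (hd : ∀ i j, t.t R (g j ∘ₗ g' i) = if i = j then 1 else 0)
    (u : (P : Type u) →ₗ[Aᵐᵒᵖ] R) :
    u = ∑ i, t.t R (u ∘ₗ g' i) • g i := by
  have hc : ∀ j, t.t R (u ∘ₗ g' j) = g.repr u j := by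
    intro j
    calc t.t R (u ∘ₗ g' j) = pairB t R P (g' j) u := rfl
      _ = pairB t R P (g' j) (∑ i, g.repr u i • g i) := by rw [g.sum_repr u]
      _ = ∑ i, g.repr u i • (pairB t R P (g' j) (g i)) := by
          rw [map_sum]; simp only [map_smul]
      _ = ∑ i, g.repr u i * (if i = j then 1 else 0) := by
          refine Finset.sum_congr rfl fun i _ => ?_
          rw [smul_eq_mul]
          congr 1
          rw [pairB_apply]
          rw [hd j i]
          simp [eq_comm]
      _ = g.repr u j := by simp
  conv_lhs => rw [← g.sum_repr u]
  exact Finset.sum_congr rfl fun i _ => by rw [hc i]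

theorem key (y : (R : Type u) →ₗ[Aᵐᵒᵖ] R) (P Q : FGProj k A) {ιP : Type u} [Fintype ιP]
    (gP : Module.Basis ιP k ((P : Type u) →ₗ[Aᵐᵒᵖ] R)) (gP' : Module.Basis ιP k ((R : Type u) →ₗ[Aᵐᵒᵖ] P))
    (hdP : ∀ i j, t.t R (gP j ∘ₗ gP' i) = if i = j then 1 else 0)
    {ιQ : Type u} [Fintype ιQ]
    (gQ : Module.Basis ιQ k ((Q : Type u) →ₗ[Aᵐᵒᵖ] R)) (gQ' : Module.Basis ιQ k ((R : Type u) →ₗ[Aᵐᵒᵖ] Q))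
    (hdQ : ∀ i j, t.t R (gQ j ∘ₗ gQ' i) = if i = j then 1 else 0)
    (h : (P : Type u) →ₗ[Aᵐᵒᵖ] Q) :
    h ∘ₗ (∑ i, gP' i ∘ₗ y ∘ₗ gP i) = (∑ j, gQ' j ∘ₗ y ∘ₗ gQ j) ∘ₗ h := by
  rw [comp_sum', sum_comp']
  have hLHS : ∀ i, h ∘ₗ (gP' i ∘ₗ y ∘ₗ gP i)
      = ∑ j, t.t R (gQ j ∘ₗ (h ∘ₗ gP' i)) • (gQ' j ∘ₗ (y ∘ₗ gP i)) := by
    intro i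
    calc h ∘ₗ (gP' i ∘ₗ y ∘ₗ gP i) = (h ∘ₗ gP' i) ∘ₗ (y ∘ₗ gP i) := by
          rw [← LinearMap.comp_assoc]
      _ = (∑ j, t.t R (gQ j ∘ₗ (h ∘ₗ gP' i)) • gQ' j) ∘ₗ (y ∘ₗ gP i) := by
          rw [← expand_v t R Q gQ gQ' hdQ (h ∘ₗ gP' i)]
      _ = ∑ j, t.t R (gQ j ∘ₗ (h ∘ₗ gP' i)) • (gQ' j ∘ₗ (y ∘ₗ gP i)) := by
          rw [sum_comp']; simp only [LinearMap.smul_comp]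
  have hRHS : ∀ j, (gQ' j ∘ₗ y ∘ₗ gQ j) ∘ₗ h
      = ∑ i, t.t R (gQ j ∘ₗ (h ∘ₗ gP' i)) • (gQ' j ∘ₗ (y ∘ₗ gP i)) := by
    intro j
    calc (gQ' j ∘ₗ y ∘ₗ gQ j) ∘ₗ h = (gQ' j ∘ₗ y) ∘ₗ (gQ j ∘ₗ h) := by
          simp only [LinearMap.comp_assoc]
      _ = (gQ' j ∘ₗ y) ∘ₗ (∑ i, t.t R ((gQ j ∘ₗ h) ∘ₗ gP' i) • gP i) := by
          rw [← expand_u t R P gP gP' hdP (gQ j ∘ₗ h)]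
      _ = ∑ i, t.t R ((gQ j ∘ₗ h) ∘ₗ gP' i) • ((gQ' j ∘ₗ y) ∘ₗ gP i) := by
          rw [comp_sum']; simp only [LinearMap.comp_smul]
      _ = ∑ i, t.t R (gQ j ∘ₗ (h ∘ₗ gP' i)) • (gQ' j ∘ₗ (y ∘ₗ gP i)) := by
          simp only [LinearMap.comp_assoc]
  calc ∑ i, h ∘ₗ (gP' i ∘ₗ y ∘ₗ gP i)
      = ∑ i, ∑ j, t.t R (gQ j ∘ₗ (h ∘ₗ gP' i)) • (gQ' j ∘ₗ (y ∘ₗ gP i)) :=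
        Finset.sum_congr rfl fun i _ => hLHS i
    _ = ∑ j, ∑ i, t.t R (gQ j ∘ₗ (h ∘ₗ gP' i)) • (gQ' j ∘ₗ (y ∘ₗ gP i)) := Finset.sum_comm
    _ = ∑ j, (gQ' j ∘ₗ y ∘ₗ gQ j) ∘ₗ h := Finset.sum_congr rfl fun j _ => (hRHS j).symm

variable (k A) in
/-- The regular right module `A_A`, as an object of `FGProj`. -/
abbrev regA : FGProj k A :=
  { carrier := Aᵐᵒᵖ,
    isAddCommGroup := inferInstance, isModuleK := inferInstance, isModuleA := inferInstance,
    isTower := inferInstance, isFinite := inferInstance, isProjective := inferInstance }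

variable (A) in
/-- Right multiplication/action by a fixed element, as a module map `A → M`. -/
def smulMap {M : Type u} [AddCommGroup M] [Module Aᵐᵒᵖ M] (m : M) :
    Aᵐᵒᵖ →ₗ[Aᵐᵒᵖ] M where
  toFun a := a • m
  map_add' a b := add_smul a b m
  map_smul' a x := by show (a • x) • m = a • (x • m); rw [smul_eq_mul, mul_smul]

@[simp] theorem smulMap_apply {M : Type u} [AddCommGroup M] [Module Aᵐᵒᵖ M] (m : M)
    (a : Aᵐᵒᵖ) : smulMap A m a = a • m := rfl

/-- Multiplication by a central element, as an endomorphism of any module. -/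
def zmulMap (z : Aᵐᵒᵖ) (hz : ∀ a : Aᵐᵒᵖ, a * z = z * a)
    (M : Type u) [AddCommGroup M] [Module Aᵐᵒᵖ M] : M →ₗ[Aᵐᵒᵖ] M where
  toFun m := z • m
  map_add' := smul_add z
  map_smul' a m := by show z • (a • m) = a • (z • m); rw [smul_smul, ← hz a, mul_smul]

@[simp] theorem zmulMap_apply (z : Aᵐᵒᵖ) (hz : ∀ a : Aᵐᵒᵖ, a * z = z * a)
    (M : Type u) [AddCommGroup M] [Module Aᵐᵒᵖ M] (m : M) : zmulMap z hz M m = z • m := rfl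

end CYHelp

end Helpers

theorem exists_unique_natEndo_of_dual_bases
    (k A : Type u) [Field k] [IsAlgClosed k] [Ring A] [Algebra k A] [FiniteDimensional k A]
    (t : CYTraces k A) (R : FGProj k A) (y : (R : Type u) →ₗ[Aᵐᵒᵖ] R) :
    ∃! η : NatEndo A,
      ∀ (P : FGProj k A) (ι : Type u) [Fintype ι]
        (g : Module.Basis ι k ((P : Type u) →ₗ[Aᵐᵒᵖ] R)) (g' : Module.Basis ι k ((R : Type u) →ₗ[Aᵐᵒᵖ] P)),
        (∀ i j, t.t R (g j ∘ₗ g' i) = if i = j then 1 else 0) →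
        η.app P = ∑ i, g' i ∘ₗ y ∘ₗ g i := by
  classical
  obtain ⟨ι₀, hfin, b, b', hd0⟩ := CYHelp.exists_dual t R (CYHelp.regA k A)
  haveI := hfin
  set e := ∑ i, b' i ∘ₗ y ∘ₗ b i with he
  set z : Aᵐᵒᵖ := e 1 with hzdef
  have hea : ∀ a : Aᵐᵒᵖ, e a = a * z := by
    intro a
    have h1 := e.map_smul a 1
    simpa [smul_eq_mul, ← hzdef] using h1
  have hz : ∀ a : Aᵐᵒᵖ, a * z = z * a := by
    intro a
    have h2 := CYHelp.key t R y (CYHelp.regA k A) (CYHelp.regA k A) b b' hd0 b b' hd0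
      (CYHelp.smulMap A a)
    rw [← he] at h2
    have h3 := congrArg (fun f => f (1 : Aᵐᵒᵖ)) h2
    simp only [LinearMap.comp_apply, CYHelp.smulMap_apply, smul_eq_mul, one_mul] at h3
    rw [hea a] at h3
    exact h3.symm
  refine ⟨⟨fun M _ _ => CYHelp.zmulMap z hz M, fun M N _ _ _ _ h => ?_⟩, ?_, ?_⟩
  · ext m
    simp [map_smul]
  · intro P ι _ g g' hd
    ext m
    have h2 := CYHelp.key t R y (CYHelp.regA k A) P b b' hd0 g g' hd (CYHelp.smulMap A m)
    rw [← he] at h2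
    have h3 := congrArg (fun f => f (1 : Aᵐᵒᵖ)) h2
    simp only [LinearMap.comp_apply, CYHelp.smulMap_apply, one_smul] at h3
    simpa using h3
  · rintro η' hη'
    have happA : η'.app Aᵐᵒᵖ = e := by
      have h4 := hη' (CYHelp.regA k A) ι₀ b b' hd0
      rw [← he] at h4
      exact h4
    have happ : ∀ (M : Type u) [AddCommGroup M] [Module Aᵐᵒᵖ M] (m : M),
        η'.app M m = z • m := by
      intro M _ _ m
      have h2 := η'.naturality Aᵐᵒᵖ M (CYHelp.smulMap A m)
      have h3 := congrArg (fun f => f (1 : Aᵐᵒᵖ)) h2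
      simp only [LinearMap.comp_apply, CYHelp.smulMap_apply, one_smul, happA] at h3
      rw [← h3, ← hzdef]
    obtain ⟨app', nat'⟩ := η'
    have hfun : app' = fun (M : Type u) (iG : AddCommGroup M) (iM : Module Aᵐᵒᵖ M) =>
        @CYHelp.zmulMap A _ z hz M iG iM := by
      funext M i1 i2
      ext m
      exact @happ M i1 i2 m
    subst hfun
    rfl
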